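/- PASS partial sums look random to the server: let I ⊆ E be a nonempty proper subset of the clients, and suppose the cross masks are random, i.e. the partial sum of pseudo distributions satisfies Σ_{e∈I} Y_e = Σ_{e∈I} N_e + D where D = Σ_{e∈I} Σ_{v∈E∖I} ε_{e,v}·R_{e,v} and the R_{e,v} are G-valued random variables. If there exists a cross pair (e₀ ∈ I, v₀ ∈ E∖I) such that R_{e₀,v₀} is uniformly distributed on G and is independent of the sum of all the remaining cross masks, then the partial sum Σ_{e∈I} Y_e is uniformly distributed on G. In particular, every aggregate of pseudo distributions other than the full aggregate over all of E reveals nothing about the private distributions, while (by antisymmetric cancellation) the full aggregate equals Σ_{e∈E} N_e. -/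
import Mathlib


/-!
PASS partial sums look random to the server: let `G = (ZMod q)^C`, let `I`
be a nonempty proper subset of the clients, and work with pseudo
distributions `Y e ω = N e + Σ_{v ≠ e} ε e v • Rm e v ω`, where the shared
masks `Rm e v = Rm v e` are `G`-valued random variables and
`ε e v = 1` if `e < v`, `-1` if `e > v`.  The partial sum then satisfies
`Σ_{e∈I} Y e = Σ_{e∈I} N e + D` with
`D = Σ_{e∈I} Σ_{v∈E∖I} ε e v • Rm e v`.  If some cross pair `(e₀ ∈ I,
v₀ ∉ I)` has `Rm e₀ v₀` uniformly distributed on `G` and independent of the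
sum `Drest` of all the remaining cross masks, then `Σ_{e∈I} Y e` is
uniformly distributed on `G`; in particular every aggregate other than the
full one reveals nothing, while by antisymmetric cancellation the full
aggregate equals `Σ_{e∈E} N e`.
-/

open Finset MeasureTheory in
lemma pass_antisym {G : Type*} [AddCommGroup G] {ι : Type*} [LinearOrder ι]
    (Rm : ι → ι → G) (hsymm : ∀ e v, Rm e v = Rm v e)
    (S : Finset ι) :
    ∑ e ∈ S, ∑ v ∈ S.erase e, (if e < v then (1:ℤ) else -1) • Rm e v = 0 := by
  classical
  rw [← Finset.sum_sigma S (fun e => S.erase e)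
    (fun p => (if p.1 < p.2 then (1:ℤ) else -1) • Rm p.1 p.2)]
  refine Finset.sum_involution (fun p _ => ⟨p.2, p.1⟩) ?_ ?_ ?_ ?_
  · rintro ⟨e, v⟩ hp
    simp only [Finset.mem_sigma, Finset.mem_erase] at hp
    have hne : e ≠ v := fun h => hp.2.1 h.symm
    rcases lt_or_gt_of_ne hne with h | h
    · simp [h, not_lt.mpr h.le, hsymm e v]
    · simp [h, not_lt.mpr h.le, hsymm e v]
  · rintro ⟨e, v⟩ hp _
    simp only [Finset.mem_sigma, Finset.mem_erase] at hp
    intro h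
    exact hp.2.1 (congrArg Sigma.fst h)
  · rintro ⟨e, v⟩ hp
    simp only [Finset.mem_sigma, Finset.mem_erase] at hp ⊢
    exact ⟨hp.2.2, fun h => hp.2.1 h.symm, hp.1⟩
  · rintro ⟨e, v⟩ hp
    rfl


theorem pass_partial_sum_uniform
    {Ω : Type*} [MeasurableSpace Ω] (P : MeasureTheory.Measure Ω)
    [MeasureTheory.IsProbabilityMeasure P]
    (q : ℕ) [NeZero q] (C : ℕ) (hC : 1 ≤ C)
    {ι : Type*} [Fintype ι] [LinearOrder ι]
    (hE : 2 ≤ Fintype.card ι)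
    -- each client `e` holds a fixed private vector `N e ∈ G = (ZMod q)^C`
    (N : ι → Fin C → ZMod q)
    -- the shared `G`-valued random masks, symmetric in the pair
    (Rm : ι → ι → Ω → Fin C → ZMod q)
    (hsymm : ∀ e v : ι, Rm e v = Rm v e)
    -- the pseudo data distributions
    (Y : ι → Ω → Fin C → ZMod q)
    (hY : ∀ (e : ι) (ω : Ω), Y e ω = N e + ∑ v ∈ Finset.univ.erase e,
      (if e < v then (1 : ℤ) else -1) • Rm e v ω)
    -- `I` is a nonempty proper subset of the clients
    (I : Finset ι) (hne : I.Nonempty) (hproper : I ≠ Finset.univ)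
    -- a cross pair `(e₀ ∈ I, v₀ ∈ E∖I)`
    (e₀ : ι) (he₀ : e₀ ∈ I) (v₀ : ι) (hv₀ : v₀ ∉ I)
    -- `Drest` is the sum of all the cross masks other than the one of
    -- the pair `(e₀, v₀)`
    (Drest : Ω → Fin C → ZMod q)
    (hDrest : ∀ ω : Ω, Drest ω =
      (∑ e ∈ I, ∑ v ∈ Iᶜ, (if e < v then (1 : ℤ) else -1) • Rm e v ω)
        - (if e₀ < v₀ then (1 : ℤ) else -1) • Rm e₀ v₀ ω)
    -- measurability of the relevant discrete events
    (hmeasR : ∀ a : Fin C → ZMod q, MeasurableSet {ω | Rm e₀ v₀ ω = a})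
    (hmeasD : ∀ a : Fin C → ZMod q, MeasurableSet {ω | Drest ω = a})
    -- `Rm e₀ v₀` is uniformly distributed on `G`
    (hunif : ∀ a : Fin C → ZMod q,
      P {ω | Rm e₀ v₀ ω = a} = 1 / (Fintype.card (Fin C → ZMod q) : ENNReal))
    -- and independent of the sum of all the remaining cross masks
    (hindep : ∀ a d : Fin C → ZMod q,
      P ({ω | Rm e₀ v₀ ω = a} ∩ {ω | Drest ω = d}) =
        P {ω | Rm e₀ v₀ ω = a} * P {ω | Drest ω = d}) :
    -- then the partial sum `Σ_{e∈I} Y e` is uniformly distributed on `G`,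
    -- while the full aggregate equals `Σ_{e∈E} N e`
    (∀ g : Fin C → ZMod q,
      P {ω | (∑ e ∈ I, Y e ω) = g} =
        1 / (Fintype.card (Fin C → ZMod q) : ENNReal)) ∧
    (∀ ω : Ω, ∑ e, Y e ω = ∑ e, N e) := by
  
  classical
  set s : ℤ := if e₀ < v₀ then 1 else -1 with hs
  have hss : ∀ x : Fin C → ZMod q, s • s • x = x := by
    intro x
    rw [smul_smul]
    rcases ite_eq_or_eq (e₀ < v₀) (1:ℤ) (-1) with h | h <;>
      rw [hs, h] <;> norm_num
  -- decomposition of the partial sum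
  have hdecomp : ∀ ω : Ω,
      ∑ e ∈ I, Y e ω = (∑ e ∈ I, N e) + (s • Rm e₀ v₀ ω + Drest ω) := by
    intro ω
    have hsplit : ∀ e ∈ I,
        ∑ v ∈ Finset.univ.erase e, (if e < v then (1 : ℤ) else -1) • Rm e v ω
        = (∑ v ∈ I.erase e, (if e < v then (1 : ℤ) else -1) • Rm e v ω)
          + ∑ v ∈ Iᶜ, (if e < v then (1 : ℤ) else -1) • Rm e v ω := by
      intro e he
      rw [← Finset.sum_union]
      · congr 1
        ext v
        simp only [Finset.mem_erase, Finset.mem_union, Finset.mem_compl,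
          Finset.mem_univ, and_true]
        constructor
        · intro hv
          by_cases hvI : v ∈ I
          · exact Or.inl ⟨hv, hvI⟩
          · exact Or.inr hvI
        · rintro (⟨hv, _⟩ | hv)
          · exact hv
          · exact fun h => hv (h ▸ he)
      · exact Finset.disjoint_left.mpr fun v hv hv' =>
          (Finset.mem_compl.mp hv') (Finset.mem_of_mem_erase hv)
    calc ∑ e ∈ I, Y e ω
        = (∑ e ∈ I, N e)
          + ((∑ e ∈ I, ∑ v ∈ I.erase e, (if e < v then (1:ℤ) else -1) • Rm e v ω)
          + ∑ e ∈ I, ∑ v ∈ Iᶜ, (if e < v then (1:ℤ) else -1) • Rm e v ω) := by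
          simp only [hY]
          rw [Finset.sum_add_distrib]
          congr 1
          rw [Finset.sum_congr rfl hsplit, Finset.sum_add_distrib]
      _ = (∑ e ∈ I, N e) + (s • Rm e₀ v₀ ω + Drest ω) := by
          rw [pass_antisym (fun e v => Rm e v ω) (fun e v => congrFun (hsymm e v) ω) I]
          rw [hDrest ω]
          abel
  constructor
  · intro g
    set T : Fin C → ZMod q := g - ∑ e ∈ I, N e with hT
    have hevent : {ω | (∑ e ∈ I, Y e ω) = g}
        = ⋃ d ∈ (Finset.univ : Finset (Fin C → ZMod q)),
            ({ω | Rm e₀ v₀ ω = s • (T - d)} ∩ {ω | Drest ω = d}) := by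
      ext ω
      simp only [Set.mem_setOf_eq, Set.mem_iUnion, Set.mem_inter_iff,
        Finset.mem_univ, exists_true_left, exists_prop, true_and]
      constructor
      · intro h
        refine ⟨Drest ω, ?_, rfl⟩
        have h' : s • Rm e₀ v₀ ω = T - Drest ω := by
          rw [hdecomp ω] at h
          rw [hT]
          rw [← h]
          abel
        rw [← h', hss]
      · rintro ⟨d, hR, hD⟩
        rw [hdecomp ω, hR, hss, hD, hT]
        abel
    rw [hevent]
    rw [MeasureTheory.measure_biUnion_finset ?disj (fun d _ => (hmeasR _).inter (hmeasD _))]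
    case disj =>
      intro d₁ _ d₂ _ hne'
      refine Set.disjoint_left.mpr ?_
      rintro ω ⟨_, h1⟩ ⟨_, h2⟩
      exact hne' (h1.symm.trans h2)
    have hsum1 : ∑ d ∈ (Finset.univ : Finset (Fin C → ZMod q)), P {ω | Drest ω = d} = 1 := by
      rw [← MeasureTheory.measure_biUnion_finset ?disj2 (fun d _ => hmeasD d)]
      case disj2 =>
        intro d₁ _ d₂ _ hne'
        refine Set.disjoint_left.mpr ?_
        rintro ω h1 h2
        exact hne' (h1.symm.trans h2)
      have : ⋃ d ∈ (Finset.univ : Finset (Fin C → ZMod q)), {ω | Drest ω = d} = Set.univ := by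
        ext ω
        simp only [Set.mem_iUnion, Set.mem_setOf_eq, Set.mem_univ, iff_true,
          Finset.mem_univ, exists_true_left, exists_prop, true_and]
        exact ⟨Drest ω, rfl⟩
      rw [this, MeasureTheory.measure_univ]
    calc ∑ d ∈ (Finset.univ : Finset (Fin C → ZMod q)),
          P ({ω | Rm e₀ v₀ ω = s • (T - d)} ∩ {ω | Drest ω = d})
        = ∑ d ∈ (Finset.univ : Finset (Fin C → ZMod q)),
            (1 / (Fintype.card (Fin C → ZMod q) : ENNReal)) * P {ω | Drest ω = d} := by
          refine Finset.sum_congr rfl fun d _ => ?_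
          rw [hindep, hunif]
      _ = (1 / (Fintype.card (Fin C → ZMod q) : ENNReal)) *
            ∑ d ∈ (Finset.univ : Finset (Fin C → ZMod q)), P {ω | Drest ω = d} := by
          rw [Finset.mul_sum]
      _ = 1 / (Fintype.card (Fin C → ZMod q) : ENNReal) := by rw [hsum1, mul_one]
  · intro ω
    simp only [hY]
    rw [Finset.sum_add_distrib,
      pass_antisym (fun e v => Rm e v ω)
        (fun e v => congrFun (hsymm e v) ω) Finset.univ,
      add_zero]
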